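/- For every u ∈ (0,1), the following integral identity holds: (1/2)·∫₀¹ u^{-p-2}·(1-u)^{p-2}·(sin(πp)/π)·(1-p) dp = g₁(u), where g₁(u) := (1/(2u²(1-u)²)) · (π² + (log((1-u)/u))² + (2/u)·log((1-u)/u)) / (π² + (log((1-u)/u))²)². -/

import Mathlib

open Real

/-- The correction term `g₁` of the refined SFS approximation. -/
noncomputable def g1 (u : ℝ) : ℝ :=
  (1 / (2 * u ^ 2 * (1 - u) ^ 2)) *
    (π ^ 2 + (Real.log ((1 - u) / u)) ^ 2 + (2 / u) * Real.log ((1 - u) / u)) /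
    (π ^ 2 + (Real.log ((1 - u) / u)) ^ 2) ^ 2

/-- For `u ∈ (0,1)`,
`(1/2) ∫₀¹ u^{-p-2}(1-u)^{p-2} (sin(πp)/π)(1-p) dp = g₁(u)`. -/
theorem stmt14 (u : ℝ) (hu : u ∈ Set.Ioo (0 : ℝ) 1) :
    (1 / 2) * ∫ p in (0:ℝ)..1,
        u ^ (-p - 2) * (1 - u) ^ (p - 2) * (Real.sin (π * p) / π) * (1 - p) = g1 u := by
  obtain ⟨hu0, hu1⟩ := hu
  have hv : (0:ℝ) < 1 - u := by linarith
  set L : ℝ := Real.log ((1 - u) / u) with hL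
  have hLd : L = Real.log (1 - u) - Real.log u := Real.log_div (ne_of_gt hv) (ne_of_gt hu0)
  have hD : (0:ℝ) < L ^ 2 + π ^ 2 := by positivity
  set F : ℝ → ℝ := fun p => (Real.exp (L * p) / (L ^ 2 + π ^ 2) ^ 2) *
      (((1 - p) * (L ^ 2 + π ^ 2) + L) * (L * Real.sin (π * p) - π * Real.cos (π * p))
        - π * (L * Real.cos (π * p) + π * Real.sin (π * p))) with hF
  have hderiv : ∀ p ∈ Set.uIcc (0:ℝ) 1,
      HasDerivAt F (Real.exp (L * p) * (1 - p) * Real.sin (π * p)) p := by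
    intro p _
    have he : HasDerivAt (fun q : ℝ => Real.exp (L * q)) (Real.exp (L * p) * L) p := by
      simpa using ((hasDerivAt_id p).const_mul L).exp
    have hs : HasDerivAt (fun q : ℝ => Real.sin (π * q)) (Real.cos (π * p) * π) p := by
      simpa using ((hasDerivAt_id p).const_mul π).sin
    have hc : HasDerivAt (fun q : ℝ => Real.cos (π * q)) (-Real.sin (π * p) * π) p := by
      simpa using ((hasDerivAt_id p).const_mul π).cos
    have h1 := (((hasDerivAt_id p).const_sub 1).mul_const (L ^ 2 + π ^ 2)).add_const L
    have h2 := (hs.const_mul L).sub (hc.const_mul π)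
    have h3 := ((hc.const_mul L).add (hs.const_mul π)).const_mul π
    have hinner := (h1.mul h2).sub h3
    have houter := (he.div_const ((L ^ 2 + π ^ 2) ^ 2)).mul hinner
    convert houter using 1
    · rfl
    · rfl
    · rfl
    have hD2 : ((L ^ 2 + π ^ 2) : ℝ) ≠ 0 := ne_of_gt hD
    simp only [Pi.sub_apply, Pi.mul_apply, Pi.add_apply, id]
    field_simp
    ring
  have hcont : Continuous (fun p : ℝ => Real.exp (L * p) * (1 - p) * Real.sin (π * p)) := by
    fun_prop
  have hint : ∫ p in (0:ℝ)..1, Real.exp (L * p) * (1 - p) * Real.sin (π * p) = F 1 - F 0 :=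
    intervalIntegral.integral_eq_sub_of_hasDerivAt hderiv (hcont.intervalIntegrable 0 1)
  have e1 : Real.exp (2 * Real.log u) = u ^ 2 := by
    rw [two_mul, Real.exp_add, Real.exp_log hu0, sq]
  have e2 : Real.exp (2 * Real.log (1 - u)) = (1 - u) ^ 2 := by
    rw [two_mul, Real.exp_add, Real.exp_log hv, sq]
  have hcong : ∀ p : ℝ, u ^ (-p - 2) * (1 - u) ^ (p - 2) * (Real.sin (π * p) / π) * (1 - p)
      = (1 / (u ^ 2 * (1 - u) ^ 2 * π)) * (Real.exp (L * p) * (1 - p) * Real.sin (π * p)) := by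
    intro p
    rw [Real.rpow_def_of_pos hu0, Real.rpow_def_of_pos hv, ← mul_assoc,
      ← Real.exp_add]
    have hexp : Real.log u * (-p - 2) + Real.log (1 - u) * (p - 2)
        = L * p - 2 * Real.log u - 2 * Real.log (1 - u) := by rw [hLd]; ring
    rw [hexp, Real.exp_sub, Real.exp_sub, e1, e2]
    have hπ : (π : ℝ) ≠ 0 := Real.pi_ne_zero
    field_simp
  rw [intervalIntegral.integral_congr (fun p _ => hcong p),
    intervalIntegral.integral_const_mul, hint]
  have hexpL : Real.exp L = (1 - u) / u := Real.exp_log (div_pos hv hu0)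
  simp only [hF, g1, hexpL, mul_one, mul_zero, Real.sin_pi, Real.cos_pi, Real.sin_zero,
    Real.cos_zero, Real.exp_zero, sub_self, zero_mul]
  have hD2 : ((L ^ 2 + π ^ 2) : ℝ) ≠ 0 := ne_of_gt hD
  have hπ : (π : ℝ) ≠ 0 := Real.pi_ne_zero
  field_simp
  ring
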